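/- arXiv:1605.00236 — 2 statements merged into one kernel-verified Lean document; each statement's English description precedes it below -/
import Mathlib

section
/- The solution set of the Landau-Ginzburg system for the blow-up of P^2 at three points, with potential W(z_1,z_2) = z_1 + z_2 + z_1 z_2 + 1/z_1 + 1/(z_1 z_2) + 1/z_2, consists of exactly the six points (1,1), (ρ,ρ), (ρ²,ρ²), (1,-1), (-1,1), (-1,-1) in (C*)², where ρ = e^{2πi/3}. -/
open Complex

lemma rho_cube : Complex.exp (2 * Real.pi * I / 3) ^ 3 = 1 := by
  rw [← Complex.exp_nat_mul]
  rw [show ((3:ℕ) : ℂ) * (2 * Real.pi * I / 3) = 2 * Real.pi * I by push_cast; ring]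
  exact Complex.exp_two_pi_mul_I

lemma rho_ne_one : Complex.exp (2 * Real.pi * I / 3) ≠ 1 := by
  intro h
  rw [Complex.exp_eq_one_iff] at h
  obtain ⟨n, hn⟩ := h
  have hpi : (2 * Real.pi * I : ℂ) ≠ 0 := by
    simp [Real.pi_ne_zero, Complex.I_ne_zero]
  have h1 : (3 : ℂ) * ((n:ℂ) * (2 * Real.pi * I)) = 2 * Real.pi * I := by
    rw [← hn]; ring
  have h2 : ((3 * n : ℤ) : ℂ) = 1 := by
    push_cast
    exact mul_right_cancel₀ hpi
      (by linear_combination h1 : (3 * (n:ℂ)) * (2 * Real.pi * I) = 1 * (2 * Real.pi * I))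
  have : (3 * n : ℤ) = 1 := by exact_mod_cast h2
  omega

lemma rho_sum : 1 + Complex.exp (2 * Real.pi * I / 3) + Complex.exp (2 * Real.pi * I / 3) ^ 2 = 0 := by
  set ρ := Complex.exp (2 * Real.pi * I / 3)
  have h : (ρ - 1) * (1 + ρ + ρ ^ 2) = 0 := by linear_combination rho_cube
  rcases mul_eq_zero.mp h with h | h
  · exact absurd (by linear_combination h) rho_ne_one
  · exact h

/-- The Landau-Ginzburg system of `Bl₃(ℙ²)` with potential
`W = z₁ + z₂ + z₁z₂ + 1/z₁ + 1/(z₁z₂) + 1/z₂` has exactly the six solutions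
`(1,1), (ρ,ρ), (ρ²,ρ²), (1,-1), (-1,1), (-1,-1)`, `ρ = e^{2πi/3}`. -/
theorem LG_solutions_Bl3P2 :
    {p : ℂ × ℂ | p.1 ≠ 0 ∧ p.2 ≠ 0 ∧
        p.1 + p.1 * p.2 - 1 / p.1 - 1 / (p.1 * p.2) = 0 ∧
        p.2 + p.1 * p.2 - 1 / (p.1 * p.2) - 1 / p.2 = 0} =
      {(1, 1), (Complex.exp (2 * Real.pi * I / 3), Complex.exp (2 * Real.pi * I / 3)),
        (Complex.exp (2 * Real.pi * I / 3) ^ 2, Complex.exp (2 * Real.pi * I / 3) ^ 2),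
        (1, -1), (-1, 1), (-1, -1)} := by
  have hρ3 := rho_cube
  have hρs := rho_sum
  have hρ0 : Complex.exp (2 * Real.pi * I / 3) ≠ 0 := Complex.exp_ne_zero _
  set ρ := Complex.exp (2 * Real.pi * I / 3) with hρdef
  ext ⟨x, y⟩
  simp only [Set.mem_setOf_eq, Set.mem_insert_iff, Set.mem_singleton_iff, Prod.mk.injEq]
  constructor
  · rintro ⟨hx, hy, h1, h2⟩
    field_simp at h1 h2
    have e1 : (x ^ 2 * y - 1) * (y + 1) = 0 := by
      rcases mul_eq_zero.mp (show x * ((x ^ 2 * y - 1) * (y + 1)) = 0 by linear_combination x * h1)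
        with h | h
      · exact absurd h hx
      · exact h
    have e2 : (x * y ^ 2 - 1) * (x + 1) = 0 := by
      rcases mul_eq_zero.mp (show y * ((x * y ^ 2 - 1) * (x + 1)) = 0 by linear_combination y * h2)
        with h | h
      · exact absurd h hy
      · exact h
    rcases mul_eq_zero.mp e1 with hA | hA <;> rcases mul_eq_zero.mp e2 with hB | hB
    · -- x²y = 1 and xy² = 1 ⇒ x = y, x³ = 1
      have hxy : x = y := by
        have h : x * y * (x - y) = 0 := by linear_combination hA - hB
        rcases mul_eq_zero.mp h with h | h
        · rcases mul_eq_zero.mp h with h | h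
          · exact absurd h hx
          · exact absurd h hy
        · exact sub_eq_zero.mp h
      subst hxy
      have hx3 : x ^ 3 = 1 := by linear_combination hA
      have hfac : (x - 1) * ((x - ρ) * (x - ρ ^ 2)) = 0 := by
        linear_combination hx3 + (x - x ^ 2) * hρs + (x - 1) * hρ3
      rcases mul_eq_zero.mp hfac with h | h
      · left
        have := sub_eq_zero.mp h
        exact ⟨this, this⟩
      · rcases mul_eq_zero.mp h with h | h
        · right; left
          have := sub_eq_zero.mp h
          exact ⟨this, this⟩
        · right; right; left
          have := sub_eq_zero.mp h
          exact ⟨this, this⟩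
    · -- x²y = 1, x = -1 ⇒ y = 1
      have hx1 : x = -1 := by linear_combination hB
      subst hx1
      have hy1 : y = 1 := by linear_combination hA
      subst hy1
      tauto
    · -- y = -1, xy² = 1 ⇒ x = 1
      have hy1 : y = -1 := by linear_combination hA
      subst hy1
      have hx1 : x = 1 := by linear_combination hB
      subst hx1
      tauto
    · have hy1 : y = -1 := by linear_combination hA
      have hx1 : x = -1 := by linear_combination hB
      subst hy1; subst hx1
      tauto
  · intro h
    rcases h with ⟨h1, h2⟩ | ⟨h1, h2⟩ | ⟨h1, h2⟩ | ⟨h1, h2⟩ | ⟨h1, h2⟩ | ⟨h1, h2⟩ <;>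
      subst h1 <;> subst h2
    · norm_num
    · refine ⟨hρ0, hρ0, ?_, ?_⟩ <;>
      · field_simp
        linear_combination (ρ + 1) * hρ3
    · refine ⟨pow_ne_zero 2 hρ0, pow_ne_zero 2 hρ0, ?_, ?_⟩ <;>
      · field_simp
        linear_combination (ρ ^ 5 + ρ ^ 3 + ρ ^ 2 + 1) * hρ3
    · norm_num
    · norm_num
    · norm_num
end

section
/- The Landau-Ginzburg system for Bl_3(P²) has exactly 6 = χ(Bl_3(P²)) solutions in (C*)², all of which are simple (the solution scheme is reduced): the Jacobian of the system is nonzero at each of the six solutions (1,1), (ρ,ρ), (ρ²,ρ²), (1,−1), (−1,1), (−1,−1), ρ = e^{2πi/3}. -/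
open Complex

/-- The Landau-Ginzburg system of `Bl₃(ℙ²)` has exactly six solutions in `(ℂ*)²`
(matching `χ(Bl₃(ℙ²)) = 6`), and all of them are simple: the Jacobian determinant
of the system `F₁ = z₁ + z₁z₂ − 1/z₁ − 1/(z₁z₂)`, `F₂ = z₂ + z₁z₂ − 1/(z₁z₂) − 1/z₂`
is nonzero at each solution. -/
theorem LG_Bl3P2_reduced :
    let ρ : ℂ := Complex.exp (2 * Real.pi * I / 3)
    let sols : Set (ℂ × ℂ) := {(1, 1), (ρ, ρ), (ρ ^ 2, ρ ^ 2), (1, -1), (-1, 1), (-1, -1)}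
    -- partial derivatives of F₁ and F₂
    let J : ℂ × ℂ → ℂ := fun p =>
      (1 + p.2 + 1 / p.1 ^ 2 + 1 / (p.1 ^ 2 * p.2)) *
        (1 + p.1 + 1 / (p.1 * p.2 ^ 2) + 1 / p.2 ^ 2) -
      (p.1 + 1 / (p.1 * p.2 ^ 2)) * (p.2 + 1 / (p.1 ^ 2 * p.2))
    ({p : ℂ × ℂ | p.1 ≠ 0 ∧ p.2 ≠ 0 ∧
        p.1 + p.1 * p.2 - 1 / p.1 - 1 / (p.1 * p.2) = 0 ∧
        p.2 + p.1 * p.2 - 1 / (p.1 * p.2) - 1 / p.2 = 0} = sols) ∧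
      Set.ncard sols = 6 ∧ ∀ p ∈ sols, J p ≠ 0 := by
  intro ρ sols J
  have hρ0 : ρ ≠ 0 := Complex.exp_ne_zero _
  have hρ3 : ρ ^ 3 = 1 := by
    show Complex.exp _ ^ 3 = 1
    rw [← Complex.exp_nat_mul, show (3:ℕ) * (2 * ↑Real.pi * I / 3) = 2 * ↑Real.pi * I by
      push_cast; ring, Complex.exp_two_pi_mul_I]
  have hρ1 : ρ ≠ 1 := by
    show Complex.exp _ ≠ 1
    rw [Ne, Complex.exp_eq_one_iff]
    rintro ⟨n, hn⟩
    have hπ : (Real.pi : ℂ) ≠ 0 := by exact_mod_cast Real.pi_ne_zero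
    have hkey : (2 * (Real.pi:ℂ) * I) * 1 = (2 * (Real.pi:ℂ) * I) * (3 * n) := by
      field_simp at hn; linear_combination (2 * (Real.pi:ℂ) * I) * hn
    have h3 : (1:ℂ) = 3 * n := mul_left_cancel₀ (by simp [hπ, I_ne_zero]) hkey
    have : (1:ℤ) = 3 * n := by exact_mod_cast h3
    omega
  have hsum : ρ ^ 2 + ρ + 1 = 0 := by
    have h : (ρ - 1) * (ρ ^ 2 + ρ + 1) = 0 := by linear_combination hρ3
    rcases mul_eq_zero.mp h with h' | h'
    · exact absurd (by linear_combination h') hρ1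
    · exact h'
  have hρ2ne1 : ρ ^ 2 ≠ 1 := fun h => hρ1 (by linear_combination hρ3 - ρ * h)
  have hρneρ2 : ρ ≠ ρ ^ 2 := fun h => hρ1 (by linear_combination hρ3 + (ρ + 1) * h)
  have hρnen1 : ρ ≠ -1 := fun h => by
    have h2 : (2:ℂ) = 0 := by linear_combination -hρ3 + (ρ^2 - ρ + 1) * h
    norm_num at h2
  have hρ2nen1 : ρ ^ 2 ≠ -1 := fun h => hρ1 (by linear_combination (ρ^2 - 1) * h - ρ * hρ3)
  have hρ20 : ρ ^ 2 ≠ 0 := pow_ne_zero 2 hρ0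
  clear_value ρ
  refine ⟨?_, ?_, ?_⟩
  · ext ⟨a, b⟩
    simp only [Set.mem_setOf_eq, sols, Set.mem_insert_iff, Set.mem_singleton_iff,
      Prod.mk.injEq]
    constructor
    · rintro ⟨ha, hb, e1, e2⟩
      field_simp at e1 e2
      have key : a * b * ((a - b) * (a * b + 1)) = 0 := by linear_combination a * b * e1 - a * b * e2
      have key2 : (a - b) * (a * b + 1) = 0 :=
        (mul_eq_zero.mp key).resolve_left (mul_ne_zero ha hb)
      rcases mul_eq_zero.mp key2 with hab | hab
      · have hab' : a = b := by linear_combination hab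
        subst hab'
        have h4 : a * ((a + 1) * (a ^ 3 - 1)) = 0 := by linear_combination a * e1
        rcases mul_eq_zero.mp ((mul_eq_zero.mp h4).resolve_left ha) with h5 | h5
        · have : a = -1 := by linear_combination h5
          subst this
          exact Or.inr (Or.inr (Or.inr (Or.inr (Or.inr ⟨rfl, rfl⟩))))
        · have h6 : (a - 1) * ((a - ρ) * (a - ρ ^ 2)) = 0 := by
            linear_combination h5 + (a - a^2) * hsum + (a - 1) * hρ3
          rcases mul_eq_zero.mp h6 with h7 | h7
          · have : a = 1 := by linear_combination h7
            subst this
            exact Or.inl ⟨rfl, rfl⟩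
          · rcases mul_eq_zero.mp h7 with h8 | h8
            · have : a = ρ := by linear_combination h8
              subst this
              exact Or.inr (Or.inl ⟨rfl, rfl⟩)
            · have : a = ρ ^ 2 := by linear_combination h8
              subst this
              exact Or.inr (Or.inr (Or.inl ⟨rfl, rfl⟩))
      · have h7 : a * (a + b) = 0 := by linear_combination -a * e1 + (a^2*b + a^2 - a) * hab
        have hb' : b = -a := by
          have := (mul_eq_zero.mp h7).resolve_left ha; linear_combination this
        subst hb'
        have h8 : (a - 1) * (a + 1) = 0 := by linear_combination -hab
        rcases mul_eq_zero.mp h8 with h9 | h9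
        · have : a = 1 := by linear_combination h9
          subst this
          exact Or.inr (Or.inr (Or.inr (Or.inl ⟨rfl, rfl⟩)))
        · have : a = -1 := by linear_combination h9
          subst this
          exact Or.inr (Or.inr (Or.inr (Or.inr (Or.inl ⟨rfl, by norm_num⟩))))
    · rintro (⟨h1, h2⟩ | ⟨h1, h2⟩ | ⟨h1, h2⟩ | ⟨h1, h2⟩ | ⟨h1, h2⟩ | ⟨h1, h2⟩) <;>
        rw [h1, h2]
      · norm_num
      · refine ⟨hρ0, hρ0, ?_, ?_⟩ <;> field_simp <;>
          linear_combination (1 + ρ) * hρ3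
      · refine ⟨hρ20, hρ20, ?_, ?_⟩ <;> field_simp <;>
          linear_combination (1 + ρ^2) * (ρ^3 + 1) * hρ3
      · norm_num
      · norm_num
      · norm_num
  · show Set.ncard _ = 6
    have d1 : ((1:ℂ), (1:ℂ)) ∉ ({(ρ, ρ), (ρ ^ 2, ρ ^ 2), (1, -1), (-1, 1), (-1, -1)} :
        Set (ℂ × ℂ)) := by
      simp only [Set.mem_insert_iff, Set.mem_singleton_iff, Prod.mk.injEq, not_or]
      norm_num [eq_comm (a := (1:ℂ)), hρ1, hρ2ne1]
    have d2 : ((ρ:ℂ), (ρ:ℂ)) ∉ ({(ρ ^ 2, ρ ^ 2), (1, -1), (-1, 1), (-1, -1)} :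
        Set (ℂ × ℂ)) := by
      simp only [Set.mem_insert_iff, Set.mem_singleton_iff, Prod.mk.injEq, not_or]
      exact ⟨fun h => hρneρ2 h.1, fun h => hρ1 h.1, fun h => hρnen1 h.1,
        fun h => hρnen1 h.1⟩
    have d3 : ((ρ^2:ℂ), (ρ^2:ℂ)) ∉ ({(1, -1), (-1, 1), (-1, -1)} : Set (ℂ × ℂ)) := by
      simp only [Set.mem_insert_iff, Set.mem_singleton_iff, Prod.mk.injEq, not_or]
      exact ⟨fun h => hρ2ne1 h.1, fun h => hρ2nen1 h.1, fun h => hρ2nen1 h.1⟩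
    have d4 : ((1:ℂ), (-1:ℂ)) ∉ ({(-1, 1), (-1, -1)} : Set (ℂ × ℂ)) := by norm_num
    have d5 : ((-1:ℂ), (1:ℂ)) ∉ ({((-1:ℂ), (-1:ℂ))} : Set (ℂ × ℂ)) := by norm_num
    rw [show sols = insert ((1:ℂ),(1:ℂ)) {(ρ, ρ), (ρ ^ 2, ρ ^ 2), (1, -1), (-1, 1), (-1, -1)}
        from rfl,
      Set.ncard_insert_of_notMem d1 (Set.toFinite _),
      Set.ncard_insert_of_notMem d2 (Set.toFinite _),
      Set.ncard_insert_of_notMem d3 (Set.toFinite _),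
      Set.ncard_insert_of_notMem d4 (Set.toFinite _),
      Set.ncard_insert_of_notMem d5 (Set.toFinite _),
      Set.ncard_singleton]
  · have hinv2 : 1 / ρ ^ 2 = ρ := by
      rw [div_eq_iff hρ20]; linear_combination -hρ3
    have hinv3 : 1 / (ρ ^ 2 * ρ) = 1 := by
      rw [div_eq_one_iff_eq (mul_ne_zero hρ20 hρ0)]; linear_combination -hρ3
    have hinv4 : 1 / (ρ * ρ ^ 2) = 1 := by
      rw [div_eq_one_iff_eq (mul_ne_zero hρ0 hρ20)]; linear_combination -hρ3
    have hinv5 : 1 / (ρ ^ 2) ^ 2 = ρ ^ 2 := by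
      rw [div_eq_iff (pow_ne_zero 2 hρ20)]; linear_combination -(ρ^3 + 1) * hρ3
    have hinv6 : 1 / ((ρ ^ 2) ^ 2 * ρ ^ 2) = 1 := by
      rw [div_eq_one_iff_eq (mul_ne_zero (pow_ne_zero 2 hρ20) hρ20)]
      linear_combination -(ρ^3 + 1) * hρ3
    have hinv7 : 1 / (ρ ^ 2 * (ρ ^ 2) ^ 2) = 1 := by
      rw [div_eq_one_iff_eq (mul_ne_zero hρ20 (pow_ne_zero 2 hρ20))]
      linear_combination -(ρ^3 + 1) * hρ3
    rintro ⟨a, b⟩ hp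
    simp only [sols, Set.mem_insert_iff, Set.mem_singleton_iff, Prod.mk.injEq] at hp
    rcases hp with ⟨h1, h2⟩ | ⟨h1, h2⟩ | ⟨h1, h2⟩ | ⟨h1, h2⟩ | ⟨h1, h2⟩ | ⟨h1, h2⟩ <;>
        rw [h1, h2] <;> simp only [J]
    · norm_num
    · have hval : (1 + ρ + 1 / ρ ^ 2 + 1 / (ρ ^ 2 * ρ)) *
          (1 + ρ + 1 / (ρ * ρ ^ 2) + 1 / ρ ^ 2) -
          (ρ + 1 / (ρ * ρ ^ 2)) * (ρ + 1 / (ρ ^ 2 * ρ)) = 3 * ρ := by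
        rw [hinv2, hinv3, hinv4]; linear_combination 3 * hsum
      rw [hval]
      exact mul_ne_zero (by norm_num) hρ0
    · have hval : (1 + ρ ^ 2 + 1 / (ρ ^ 2) ^ 2 + 1 / ((ρ ^ 2) ^ 2 * ρ ^ 2)) *
          (1 + ρ ^ 2 + 1 / (ρ ^ 2 * (ρ ^ 2) ^ 2) + 1 / (ρ ^ 2) ^ 2) -
          (ρ ^ 2 + 1 / (ρ ^ 2 * (ρ ^ 2) ^ 2)) * (ρ ^ 2 + 1 / ((ρ ^ 2) ^ 2 * ρ ^ 2)) =
          3 * ρ ^ 2 := by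
        rw [hinv5, hinv6, hinv7]; linear_combination 3 * hsum + 3 * ρ * hρ3
      rw [hval]
      exact mul_ne_zero (by norm_num) hρ20
    · norm_num
    · norm_num
    · norm_num
end
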